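/- Fix $r < 0$, real $x,y$ with $|x| \le y$ and $y > 0$. Then for all $v \in \mathbb{R}$, $F_r(v; x, y) \le 2^{2-r}\,\frac{r(r-1)\,v^2}{x^2+y^2}$, where $F_r(v;x,y) = \big(\frac{(x-v)^2+y^2}{x^2+y^2}\big)^r - 1 + \frac{2rvx}{x^2+y^2}$. -/

import Mathlib

noncomputable def auxD (r x y : ℝ) : ℝ → ℝ := fun t =>
  2^(2-r)*(r*(r-1))/(x^2+y^2) * t^2 - (((x - t)^2 + y^2)/(x^2+y^2))^r + 1 - 2*r*x/(x^2+y^2) * t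

noncomputable def auxD1 (r x y : ℝ) : ℝ → ℝ := fun t =>
  2^(2-r)*(r*(r-1))/(x^2+y^2) * (2*t)
    - 2*(t-x)/(x^2+y^2) * r * (((x - t)^2 + y^2)/(x^2+y^2))^(r-1) - 2*r*x/(x^2+y^2)

noncomputable def auxD2 (r x y : ℝ) : ℝ → ℝ := fun t =>
  2^(2-r)*(r*(r-1))/(x^2+y^2) * 2
    - (2/(x^2+y^2)*r * (((x - t)^2 + y^2)/(x^2+y^2))^(r-1)
       + 2*(t-x)/(x^2+y^2)*r * (2*(t-x)/(x^2+y^2)*(r-1)*(((x - t)^2 + y^2)/(x^2+y^2))^(r-1-1)))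

/-- For `r < 0`, `|x| ≤ y`, `y > 0`:
`F_r(v;x,y) ≤ 2^{2-r} r(r-1) v² / (x²+y²)` for all real `v`. -/
theorem F_r_bound_small_x (r x y : ℝ) (hr : r < 0) (hy : 0 < y) (hxy : |x| ≤ y) :
    ∀ v : ℝ,
      (((x - v) ^ 2 + y ^ 2) / (x ^ 2 + y ^ 2)) ^ r - 1 + 2 * r * v * x / (x ^ 2 + y ^ 2)
        ≤ (2 : ℝ) ^ (2 - r) * (r * (r - 1) * v ^ 2 / (x ^ 2 + y ^ 2)) := by
  have hc : (0:ℝ) < x^2 + y^2 := by positivity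
  have hnum : ∀ v : ℝ, (0:ℝ) < (x - v)^2 + y^2 := fun v => by positivity
  have hgpos : ∀ v : ℝ, (0:ℝ) < ((x - v)^2 + y^2)/(x^2+y^2) := fun v => div_pos (hnum v) hc
  have hx2 : x^2 ≤ y^2 := by nlinarith [abs_nonneg x, sq_abs x]
  have ghalf : ∀ v : ℝ, (1:ℝ)/2 ≤ ((x - v)^2 + y^2)/(x^2+y^2) := by
    intro v
    rw [le_div_iff₀ hc]
    nlinarith [sq_nonneg (x - v)]
  have hrr : (0:ℝ) < r*(r-1) := mul_pos_of_neg_of_neg hr (by linarith)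
  -- derivative of g
  have hgd : ∀ v : ℝ, HasDerivAt (fun t => ((x - t)^2 + y^2)/(x^2+y^2)) (2*(v-x)/(x^2+y^2)) v := by
    intro v
    have h1 : HasDerivAt (fun t : ℝ => x - t) (-1) v := (hasDerivAt_id v).const_sub x
    have h2 : HasDerivAt (fun t : ℝ => (x - t)^2) (2*(v-x)) v := by
      have := h1.pow 2
      refine this.congr_deriv ?_
      push_cast; ring
    exact (h2.add_const (y^2)).div_const (x^2+y^2)
  -- first derivative
  have hDd : ∀ v : ℝ, HasDerivAt (auxD r x y) (auxD1 r x y v) v := by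
    intro v
    have h1 : HasDerivAt (fun t : ℝ => 2^(2-r)*(r*(r-1))/(x^2+y^2) * t^2)
        (2^(2-r)*(r*(r-1))/(x^2+y^2) * (2*v)) v := by
      have := (hasDerivAt_pow 2 v).const_mul (2^(2-r)*(r*(r-1))/(x^2+y^2))
      refine this.congr_deriv ?_
      push_cast; ring
    have h2 : HasDerivAt (fun t => (((x - t)^2 + y^2)/(x^2+y^2))^r)
        (2*(v-x)/(x^2+y^2) * r * (((x - v)^2 + y^2)/(x^2+y^2))^(r-1)) v :=
      (hgd v).rpow_const (Or.inl (ne_of_gt (hgpos v)))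
    have h3 : HasDerivAt (fun t : ℝ => 2*r*x/(x^2+y^2) * t) (2*r*x/(x^2+y^2)) v := by
      simpa using (hasDerivAt_id v).const_mul (2*r*x/(x^2+y^2))
    exact ((h1.sub h2).add_const 1).sub h3
  -- second derivative
  have hD2 : ∀ v : ℝ, HasDerivAt (auxD1 r x y) (auxD2 r x y v) v := by
    intro v
    have h1 : HasDerivAt (fun t : ℝ => 2^(2-r)*(r*(r-1))/(x^2+y^2) * (2*t))
        (2^(2-r)*(r*(r-1))/(x^2+y^2) * 2) v := by
      have := ((hasDerivAt_id v).const_mul (2:ℝ)).const_mul (2^(2-r)*(r*(r-1))/(x^2+y^2))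
      refine this.congr_deriv ?_
      ring
    have hu : HasDerivAt (fun t : ℝ => 2*(t-x)/(x^2+y^2) * r) (2/(x^2+y^2)*r) v := by
      have := ((((hasDerivAt_id v).sub_const x).const_mul (2:ℝ)).div_const (x^2+y^2)).mul_const r
      refine this.congr_deriv ?_
      ring
    have hw : HasDerivAt (fun t => (((x - t)^2 + y^2)/(x^2+y^2))^(r-1))
        (2*(v-x)/(x^2+y^2)*(r-1)*(((x - v)^2 + y^2)/(x^2+y^2))^(r-1-1)) v :=
      (hgd v).rpow_const (Or.inl (ne_of_gt (hgpos v)))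
    exact (h1.sub (hu.mul hw)).sub_const (2*r*x/(x^2+y^2))
  -- second derivative is nonnegative
  have hnn : ∀ v : ℝ, 0 ≤ auxD2 r x y v := by
    intro v
    simp only [auxD2]
    set g : ℝ := ((x - v)^2 + y^2)/(x^2+y^2) with hgdef
    have hg : 0 < g := hgpos v
    set A : ℝ := g^(r-1) with hA_def
    set B : ℝ := g^(r-1-1) with hB_def
    have hA : 0 < A := Real.rpow_pos_of_pos hg _
    have hB : 0 < B := Real.rpow_pos_of_pos hg _
    have hgc : g * (x^2+y^2) = (x - v)^2 + y^2 := div_mul_cancel₀ _ hc.ne'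
    have hBA : B * g = A := by
      rw [hA_def, hB_def, ← Real.rpow_add_one hg.ne' (r-1-1)]
      congr 1
      ring
    have h2' : B * (x - v)^2 ≤ A * (x^2+y^2) := by
      have : B * ((x - v)^2 + y^2) = A * (x^2+y^2) := by
        rw [← hgc, ← mul_assoc, hBA]
      nlinarith [sq_nonneg y, hB]
    have h3 : A ≤ (2:ℝ)^(1-r) := by
      have h12 : ((1:ℝ)/2)^(r-1) = (2:ℝ)^(1-r) := by
        rw [show (1:ℝ)-r = -(r-1) by ring, Real.rpow_neg (by norm_num : (0:ℝ) ≤ 2), one_div,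
          Real.inv_rpow (by norm_num : (0:ℝ) ≤ 2)]
      rw [hA_def, ← h12]
      exact Real.rpow_le_rpow_of_nonpos one_half_pos (ghalf v) (by linarith)
    have h4 : (2:ℝ)^(2-r) = 2 * (2:ℝ)^(1-r) := by
      rw [show (2:ℝ)-r = 1+(1-r) by ring, Real.rpow_add (by norm_num), Real.rpow_one]
    have h2pos : (0:ℝ) < (2:ℝ)^(1-r) := Real.rpow_pos_of_pos two_pos _
    rw [h4]
    have grepr : 2*(2:ℝ)^(1-r)*(r*(r-1))/(x^2+y^2) * 2
        - (2/(x^2+y^2)*r * A + 2*(v-x)/(x^2+y^2)*r*(2*(v-x)/(x^2+y^2)*(r-1)*B))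
        = (4*(2:ℝ)^(1-r)*(r*(r-1))*(x^2+y^2) - 2*r*A*(x^2+y^2) - 4*(v-x)^2*(r*(r-1))*B)
            / (x^2+y^2)^2 := by
      field_simp
      ring
    rw [grepr]
    apply div_nonneg _ (by positivity)
    have e1 : 4*(v-x)^2*(r*(r-1))*B ≤ 4*(r*(r-1))*(A*(x^2+y^2)) := by
      nlinarith [mul_le_mul_of_nonneg_left h2' (by positivity : (0:ℝ) ≤ 4*(r*(r-1)))]
    have e3 : 4*(r*(r-1))*(A*(x^2+y^2)) ≤ 4*(r*(r-1))*((2:ℝ)^(1-r)*(x^2+y^2)) :=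
      mul_le_mul_of_nonneg_left (mul_le_mul_of_nonneg_right h3 hc.le)
        (by positivity)
    have e4 : (0:ℝ) ≤ -(2*r*A*(x^2+y^2)) := by nlinarith [mul_pos (mul_pos (neg_pos.2 hr) hA) hc]
    linarith
  have hmono : Monotone (auxD1 r x y) :=
    monotone_of_deriv_nonneg (fun t => (hD2 t).differentiableAt)
      (fun t => by rw [(hD2 t).deriv]; exact hnn t)
  have hD1_0 : auxD1 r x y 0 = 0 := by
    have hone : ((x - (0:ℝ))^2 + y^2)/(x^2+y^2) = 1 := by
      rw [sub_zero]; exact div_self hc.ne'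
    simp only [auxD1, hone, Real.one_rpow]
    ring
  have hD0 : auxD r x y 0 = 0 := by
    have hone : ((x - (0:ℝ))^2 + y^2)/(x^2+y^2) = 1 := by
      rw [sub_zero]; exact div_self hc.ne'
    simp only [auxD, hone, Real.one_rpow]
    ring
  have hdiff : Differentiable ℝ (auxD r x y) := fun t => (hDd t).differentiableAt
  have hmonoD : MonotoneOn (auxD r x y) (Set.Ici 0) :=
    monotoneOn_of_deriv_nonneg (convex_Ici 0) hdiff.continuous.continuousOn
      hdiff.differentiableOn
      (fun t ht => by
        rw [(hDd t).deriv]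
        have h0t : (0:ℝ) ≤ t := le_of_lt (by simpa [interior_Ici] using ht)
        linarith [hmono h0t, hD1_0])
  have hantiD : AntitoneOn (auxD r x y) (Set.Iic 0) :=
    antitoneOn_of_deriv_nonpos (convex_Iic 0) hdiff.continuous.continuousOn
      hdiff.differentiableOn
      (fun t ht => by
        rw [(hDd t).deriv]
        have h0t : t ≤ (0:ℝ) := le_of_lt (by simpa [interior_Iic] using ht)
        linarith [hmono h0t, hD1_0])
  intro v
  have key : 0 ≤ auxD r x y v := by
    rcases le_total 0 v with h | h
    · have := hmonoD Set.self_mem_Ici (Set.mem_Ici.2 h) h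
      linarith [hD0]
    · have := hantiD (Set.mem_Iic.2 h) Set.self_mem_Iic h
      linarith [hD0]
  have hfin : (2:ℝ)^(2-r) * (r*(r-1)*v^2/(x^2+y^2))
      - ((((x - v)^2 + y^2)/(x^2+y^2))^r - 1 + 2*r*v*x/(x^2+y^2)) = auxD r x y v := by
    simp only [auxD]
    ring
  linarith [key, hfin]
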